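/- Let f : ℝ³ → ℝ be Lebesgue measurable, nonnegative almost everywhere, strictly positive on a set of positive Lebesgue measure, and satisfy ∫_{ℝ³} p⁰(p)·f(p) dp < ∞, where p⁰(p) := √(1+|p|²). Define the 4×4 real matrix T by T_{αβ} := ∫_{ℝ³} p^α p^β f(p)/p⁰(p) dp for α,β ∈ {0,1,2,3}, where p¹,p²,p³ are the components of p and p⁰ is as above. Then T is symmetric and positive definite; in particular, for every nonzero X ∈ ℝ⁴ one has Xᵀ T X = ∫_{ℝ³} (Σ_{α=0}^{3} X_α p^α)² f(p)/p⁰(p) dp > 0. -/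

import Mathlib

open MeasureTheory Matrix

/-- On-shell energy `p⁰(p) = √(1 + |p|²)` (units `m = c = 1`). -/
noncomputable def pZero (p : Fin 3 → ℝ) : ℝ := Real.sqrt (1 + ∑ i, p i ^ 2)

/-- The momentum 4-vector `(p⁰, p¹, p², p³)` of a particle with momentum `p ∈ ℝ³`. -/
noncomputable def pVec (p : Fin 3 → ℝ) : Fin 4 → ℝ := ![pZero p, p 0, p 1, p 2]

/-- The energy–momentum tensor `T_{αβ} = ∫ p^α p^β f(p)/p⁰(p) dp`. -/
noncomputable def Tmat (f : (Fin 3 → ℝ) → ℝ) : Matrix (Fin 4) (Fin 4) ℝ :=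
  Matrix.of fun α β => ∫ p : Fin 3 → ℝ, pVec p α * pVec p β * f p / pZero p

lemma sq_pZero (p : Fin 3 → ℝ) : pZero p ^ 2 = 1 + ∑ i, p i ^ 2 :=
  Real.sq_sqrt (by positivity)

lemma one_le_pZero (p : Fin 3 → ℝ) : 1 ≤ pZero p := by
  have h := sq_pZero p
  have h2 : 0 ≤ pZero p := Real.sqrt_nonneg _
  have h3 : 0 ≤ ∑ i, p i ^ 2 := by positivity
  nlinarith

lemma pZero_pos (p : Fin 3 → ℝ) : 0 < pZero p := lt_of_lt_of_le one_pos (one_le_pZero p)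

lemma continuous_pZero : Continuous pZero := by
  unfold pZero; fun_prop

lemma measurable_pVec (α : Fin 4) : Measurable fun p => pVec p α := by
  fin_cases α <;> simp [pVec] <;>
    first
      | exact continuous_pZero.measurable
      | exact measurable_pi_apply _

lemma abs_pVec_le (p : Fin 3 → ℝ) (α : Fin 4) : |pVec p α| ≤ pZero p := by
  have key : ∀ i : Fin 3, |p i| ≤ pZero p := by
    intro i
    have hs : p i ^ 2 ≤ 1 + ∑ j, p j ^ 2 := by
      have h0 : p i ^ 2 ≤ ∑ j, p j ^ 2 := by
        simpa using Finset.single_le_sum (f := fun j => p j ^ 2)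
          (fun j _ => sq_nonneg (p j)) (Finset.mem_univ i)
      linarith
    calc |p i| = Real.sqrt (p i ^ 2) := (Real.sqrt_sq_eq_abs _).symm
      _ ≤ pZero p := Real.sqrt_le_sqrt hs
  fin_cases α <;> simp [pVec]
  · rw [abs_of_nonneg (pZero_pos p).le]
  · exact key 0
  · exact key 1
  · exact key 2

/-- Zero set of a nondegenerate real quadratic (in one variable) is null. -/
lemma quad_root_null (A B C : ℝ) (h : A ≠ 0 ∨ B ≠ 0 ∨ C ≠ 0) :
    volume {t : ℝ | A * t ^ 2 + B * t + C = 0} = 0 := by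
  by_cases hA : A = 0
  · by_cases hB : B = 0
    · have hC : C ≠ 0 := by tauto
      have he : {t : ℝ | A * t ^ 2 + B * t + C = 0} = ∅ := by
        ext t; simp [hA, hB, hC]
      simp [he]
    · have hfin : volume ({-C / B} : Set ℝ) = 0 :=
        (Set.finite_singleton _).measure_zero _
      refine measure_mono_null ?_ hfin
      intro t ht
      simp only [Set.mem_setOf_eq] at ht
      simp only [Set.mem_singleton_iff]
      rw [eq_div_iff hB]
      rw [hA] at ht; linarith
  · set D := B ^ 2 - 4 * A * C with hD
    have hfin : volume ({(-B + Real.sqrt D) / (2 * A),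
        (-B - Real.sqrt D) / (2 * A)} : Set ℝ) = 0 :=
      ((Set.finite_singleton _).insert _).measure_zero _
    refine measure_mono_null ?_ hfin
    intro t ht
    simp only [Set.mem_setOf_eq] at ht
    have h1 : (2 * A * t + B) ^ 2 = D := by linear_combination (4 * A) * ht
    have h2 : |2 * A * t + B| = Real.sqrt D := by
      rw [← Real.sqrt_sq_eq_abs, h1]
    have hA2 : (2 : ℝ) * A ≠ 0 := by simpa using hA
    rcases (abs_eq (Real.sqrt_nonneg D)).mp h2 with h3 | h3
    · left
      rw [eq_div_iff hA2]; linarith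
    · right
      simp only [Set.mem_singleton_iff]
      rw [eq_div_iff hA2]; linarith

/-- A set in `ℝ³` cut out by a per-slice quadratic equation (in the `i`-th coordinate)
with nowhere fully degenerate coefficients is null. -/
lemma slice_null (i : Fin 3) (A : ℝ) (B C : (Fin 2 → ℝ) → ℝ)
    (hB : Measurable B) (hC : Measurable C)
    (hnz : ∀ q, A ≠ 0 ∨ B q ≠ 0 ∨ C q ≠ 0) :
    volume {p : Fin 3 → ℝ |
      A * p i ^ 2 + B (fun j => p (i.succAbove j)) * p i + C (fun j => p (i.succAbove j)) = 0}
      = 0 := by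
  set e := MeasurableEquiv.piFinSuccAbove (fun _ : Fin 3 => ℝ) i with he
  have hmp := volume_preserving_piFinSuccAbove (fun _ : Fin 3 => ℝ) i
  set S : Set (ℝ × (Fin 2 → ℝ)) := {x | A * x.1 ^ 2 + B x.2 * x.1 + C x.2 = 0} with hS
  have hmS : Measurable fun x : ℝ × (Fin 2 → ℝ) => A * x.1 ^ 2 + B x.2 * x.1 + C x.2 := by
    exact ((measurable_const.mul (measurable_fst.pow measurable_const)).add
      ((hB.comp measurable_snd).mul measurable_fst)).add (hC.comp measurable_snd)
  have hSm : MeasurableSet S := hmS (measurableSet_singleton 0)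
  have key : {p : Fin 3 → ℝ |
      A * p i ^ 2 + B (fun j => p (i.succAbove j)) * p i + C (fun j => p (i.succAbove j)) = 0}
      = e ⁻¹' S := by
    ext p
    simp only [Set.mem_preimage, hS, Set.mem_setOf_eq, he,
      MeasurableEquiv.piFinSuccAbove_apply]
    rfl
  rw [key, hmp.measure_preimage hSm.nullMeasurableSet]
  have hvol : (volume : Measure (ℝ × (Fin 2 → ℝ))) = (volume : Measure ℝ).prod volume :=
    rfl
  rw [hvol]
  have hswap : ((volume : Measure ℝ).prod volume) S
      = ((volume : Measure (Fin 2 → ℝ)).prod volume) (Prod.swap ⁻¹' S) := by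
    rw [← Measure.prod_swap, Measure.map_apply measurable_swap hSm]
  rw [hswap]
  rw [Measure.measure_prod_null (measurable_swap hSm)]
  refine Filter.Eventually.of_forall fun q => ?_
  show volume (Prod.mk q ⁻¹' (Prod.swap ⁻¹' S)) = (0 : (Fin 2 → ℝ) → ENNReal) q
  simp only [Pi.zero_apply]
  have : (Prod.mk q ⁻¹' (Prod.swap ⁻¹' S)) = {t : ℝ | A * t ^ 2 + B q * t + C q = 0} := rfl
  rw [this]
  exact quad_root_null A (B q) (C q) (hnz q)

lemma sum_pVec_eq (X : Fin 4 → ℝ) (p : Fin 3 → ℝ) :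
    ∑ α, X α * pVec p α = X 0 * pZero p + ∑ k : Fin 3, X k.succ * p k := by
  simp [Fin.sum_univ_four, Fin.sum_univ_three, pVec,
    show (Fin.succ 0 : Fin 4) = 1 by decide, show (Fin.succ 1 : Fin 4) = 2 by decide,
    show (Fin.succ 2 : Fin 4) = 3 by decide]
  ring

/-- The zero set of `p ↦ ∑ α, X α (pVec p) α` is null for `X ≠ 0`. -/
lemma phi_null (X : Fin 4 → ℝ) (hX : X ≠ 0) :
    volume {p : Fin 3 → ℝ | ∑ α, X α * pVec p α = 0} = 0 := by
  set c : Fin 3 → ℝ := fun k => X k.succ with hc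
  obtain ⟨i, hnz⟩ : ∃ i : Fin 3, ∀ q : Fin 2 → ℝ,
      (X 0) ^ 2 - c i ^ 2 ≠ 0 ∨
      (-2 * c i * ∑ j, c (i.succAbove j) * q j) ≠ 0 ∨
      ((X 0) ^ 2 * (1 + ∑ j, q j ^ 2) - (∑ j, c (i.succAbove j) * q j) ^ 2) ≠ 0 := by
    by_cases hA : ∃ i, (X 0) ^ 2 - c i ^ 2 ≠ 0
    · obtain ⟨i, hi⟩ := hA
      exact ⟨i, fun q => Or.inl hi⟩
    · push_neg at hA
      have hX0 : X 0 ≠ 0 := by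
        intro h0
        apply hX
        funext α
        refine Fin.cases h0 (fun k => ?_) α
        have hk := hA k
        have : c k ^ 2 = 0 := by rw [h0] at hk; nlinarith
        have := pow_eq_zero_iff (n := 2) (by norm_num) |>.mp this
        exact this
      refine ⟨0, fun q => ?_⟩
      by_cases hm : (∑ j, c ((0 : Fin 3).succAbove j) * q j) = 0
      · right; right
        rw [hm]
        have h1 : 0 ≤ ∑ j, q j ^ 2 := by positivity
        have h2 : 0 < (X 0) ^ 2 := by positivity
        nlinarith
      · right; left
        have hc0 : c 0 ≠ 0 := by
          intro h
          have := hA 0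
          rw [h] at this
          exact hX0 (by nlinarith)
        exact mul_ne_zero (mul_ne_zero (by norm_num) hc0) hm
  have hBm : Measurable fun q : Fin 2 → ℝ => -2 * c i * ∑ j, c (i.succAbove j) * q j := by
    apply Measurable.const_mul
    exact Finset.measurable_sum _ fun j _ => (measurable_pi_apply j).const_mul _
  have hCm : Measurable fun q : Fin 2 → ℝ =>
      (X 0) ^ 2 * (1 + ∑ j, q j ^ 2) - (∑ j, c (i.succAbove j) * q j) ^ 2 := by
    apply Measurable.sub
    · apply Measurable.const_mul
      apply Measurable.const_add
      exact Finset.measurable_sum _ fun j _ => (measurable_pi_apply j).pow measurable_const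
    · exact (Finset.measurable_sum _ fun j _ =>
        (measurable_pi_apply j).const_mul _).pow measurable_const
  refine measure_mono_null ?_
    (slice_null i ((X 0) ^ 2 - c i ^ 2)
      (fun q => -2 * c i * ∑ j, c (i.succAbove j) * q j)
      (fun q => (X 0) ^ 2 * (1 + ∑ j, q j ^ 2) - (∑ j, c (i.succAbove j) * q j) ^ 2)
      hBm hCm hnz)
  intro p hp
  simp only [Set.mem_setOf_eq] at hp ⊢
  have hE : X 0 * pZero p + (c i * p i + ∑ j, c (i.succAbove j) * p (i.succAbove j)) = 0 := by
    rw [← Fin.sum_univ_succAbove (fun k => c k * p k) i]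
    rw [sum_pVec_eq X p] at hp
    exact hp
  have hs := sq_pZero p
  have hsplit : ∑ k, p k ^ 2 = p i ^ 2 + ∑ j, p (i.succAbove j) ^ 2 :=
    Fin.sum_univ_succAbove (fun k => p k ^ 2) i
  set m := ∑ j, c (i.succAbove j) * p (i.succAbove j) with hm
  linear_combination (X 0 * pZero p - c i * p i - m) * hE - (X 0) ^ 2 * hs
    - (X 0) ^ 2 * hsplit

lemma integrable_entry (f : (Fin 3 → ℝ) → ℝ) (hmeas : Measurable f)
    (hnn : ∀ᵐ p : Fin 3 → ℝ, 0 ≤ f p)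
    (hint : Integrable (fun p : Fin 3 → ℝ => pZero p * f p)) (α β : Fin 4) :
    Integrable (fun p : Fin 3 → ℝ => pVec p α * pVec p β * f p / pZero p) := by
  refine hint.mono' ?_ ?_
  · exact ((((measurable_pVec α).mul (measurable_pVec β)).mul hmeas).div
      continuous_pZero.measurable).aestronglyMeasurable
  · filter_upwards [hnn] with p hf
    rw [Real.norm_eq_abs, abs_div, abs_mul, abs_mul, abs_of_nonneg hf,
      abs_of_pos (pZero_pos p), div_le_iff₀ (pZero_pos p)]
    have h1 : |pVec p α| * |pVec p β| ≤ pZero p * pZero p :=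
      mul_le_mul (abs_pVec_le p α) (abs_pVec_le p β) (abs_nonneg _) (pZero_pos p).le
    have h2 := mul_le_mul_of_nonneg_right h1 hf
    nlinarith [h2]

lemma measurable_phi (X : Fin 4 → ℝ) : Measurable fun p => ∑ α, X α * pVec p α :=
  Finset.measurable_sum _ fun α _ => (measurable_pVec α).const_mul _

lemma abs_phi_le (X : Fin 4 → ℝ) (p : Fin 3 → ℝ) :
    |∑ α, X α * pVec p α| ≤ (∑ α, |X α|) * pZero p := by
  calc |∑ α, X α * pVec p α| ≤ ∑ α, |X α * pVec p α| := Finset.abs_sum_le_sum_abs _ _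
    _ ≤ ∑ α, |X α| * pZero p := Finset.sum_le_sum fun α _ => by
        rw [abs_mul]; exact mul_le_mul_of_nonneg_left (abs_pVec_le p α) (abs_nonneg _)
    _ = (∑ α, |X α|) * pZero p := (Finset.sum_mul _ _ _).symm

lemma integrable_quad (f : (Fin 3 → ℝ) → ℝ) (hmeas : Measurable f)
    (hnn : ∀ᵐ p : Fin 3 → ℝ, 0 ≤ f p)
    (hint : Integrable (fun p : Fin 3 → ℝ => pZero p * f p)) (X : Fin 4 → ℝ) :
    Integrable (fun p : Fin 3 → ℝ => (∑ α, X α * pVec p α) ^ 2 * f p / pZero p) := by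
  refine (hint.const_mul ((∑ α, |X α|) ^ 2)).mono' ?_ ?_
  · exact ((((measurable_phi X).pow measurable_const).mul hmeas).div
      continuous_pZero.measurable).aestronglyMeasurable
  · filter_upwards [hnn] with p hf
    rw [Real.norm_eq_abs, abs_div, abs_mul, abs_of_nonneg hf,
      abs_of_pos (pZero_pos p), div_le_iff₀ (pZero_pos p)]
    have h1 : |(∑ α, X α * pVec p α) ^ 2| = |∑ α, X α * pVec p α| ^ 2 := by
      rw [abs_pow]
    rw [h1]
    have h2 : |∑ α, X α * pVec p α| ^ 2 ≤ ((∑ α, |X α|) * pZero p) ^ 2 :=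
      pow_le_pow_left₀ (abs_nonneg _) (abs_phi_le X p) 2
    have h3 := mul_le_mul_of_nonneg_right h2 hf
    nlinarith [h3]

lemma quad_form_eq (f : (Fin 3 → ℝ) → ℝ)
    (hI : ∀ α β, Integrable (fun p : Fin 3 → ℝ => pVec p α * pVec p β * f p / pZero p))
    (X : Fin 4 → ℝ) :
    X ⬝ᵥ Tmat f *ᵥ X = ∫ p : Fin 3 → ℝ, (∑ α, X α * pVec p α) ^ 2 * f p / pZero p := by
  have h1 : X ⬝ᵥ Tmat f *ᵥ X
      = ∑ α, ∑ β, ∫ p : Fin 3 → ℝ,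
        X α * (pVec p α * pVec p β * f p / pZero p * X β) := by
    simp only [dotProduct, mulVec, Tmat, Matrix.of_apply, Finset.mul_sum]
    refine Finset.sum_congr rfl fun α _ => Finset.sum_congr rfl fun β _ => ?_
    rw [← integral_mul_const, ← integral_const_mul]
  rw [h1]
  have hI2 : ∀ α β : Fin 4, Integrable
      (fun p : Fin 3 → ℝ => X α * (pVec p α * pVec p β * f p / pZero p * X β)) :=
    fun α β => ((hI α β).mul_const (X β)).const_mul (X α)
  have h2 : ∀ α : Fin 4, ∑ β, (∫ p : Fin 3 → ℝ,
      X α * (pVec p α * pVec p β * f p / pZero p * X β))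
      = ∫ p : Fin 3 → ℝ, ∑ β, X α * (pVec p α * pVec p β * f p / pZero p * X β) :=
    fun α => (integral_finset_sum _ fun β _ => hI2 α β).symm
  simp only [h2]
  rw [← integral_finset_sum _ fun α _ => integrable_finset_sum _ fun β _ => hI2 α β]
  refine integral_congr_ae (Filter.Eventually.of_forall fun p => ?_)
  show (∑ α, ∑ β, X α * (pVec p α * pVec p β * f p / pZero p * X β))
      = (∑ α, X α * pVec p α) ^ 2 * f p / pZero p
  rw [sq, Finset.sum_mul_sum, Finset.sum_mul, Finset.sum_div]
  refine Finset.sum_congr rfl fun α _ => ?_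
  rw [Finset.sum_mul, Finset.sum_div]
  refine Finset.sum_congr rfl fun β _ => ?_
  ring

theorem stmt0 (f : (Fin 3 → ℝ) → ℝ)
    (hmeas : Measurable f)
    (hnn : ∀ᵐ p : Fin 3 → ℝ, 0 ≤ f p)
    (hpos : 0 < volume {p : Fin 3 → ℝ | 0 < f p})
    (hint : Integrable (fun p : Fin 3 → ℝ => pZero p * f p)) :
    (Tmat f).IsSymm ∧ (Tmat f).PosDef ∧
      ∀ X : Fin 4 → ℝ, X ≠ 0 →
        X ⬝ᵥ (Tmat f) *ᵥ X
            = ∫ p : Fin 3 → ℝ, (∑ α, X α * pVec p α) ^ 2 * f p / pZero p ∧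
          0 < X ⬝ᵥ (Tmat f) *ᵥ X := by
  have hI := integrable_entry f hmeas hnn hint
  have hEq := quad_form_eq f hI
  have hQpos : ∀ X : Fin 4 → ℝ, X ≠ 0 →
      0 < ∫ p : Fin 3 → ℝ, (∑ α, X α * pVec p α) ^ 2 * f p / pZero p := by
    intro X hX
    set g := fun p : Fin 3 → ℝ => (∑ α, X α * pVec p α) ^ 2 * f p / pZero p with hg
    have hgi : Integrable g := integrable_quad f hmeas hnn hint X
    have hg0 : 0 ≤ᵐ[volume] g := by
      filter_upwards [hnn] with p hf
      exact div_nonneg (mul_nonneg (sq_nonneg _) hf) (pZero_pos p).le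
    rw [integral_pos_iff_support_of_nonneg_ae hg0 hgi]
    have hsub : {p : Fin 3 → ℝ | 0 < f p} \ {p | ∑ α, X α * pVec p α = 0}
        ⊆ Function.support g := by
      rintro p ⟨hpf, hpz⟩
      simp only [Set.mem_setOf_eq] at hpf hpz
      exact div_ne_zero (mul_ne_zero (pow_ne_zero _ hpz) (ne_of_gt hpf)) (pZero_pos p).ne'
    calc (0 : ENNReal) < volume {p : Fin 3 → ℝ | 0 < f p} := hpos
      _ = volume ({p : Fin 3 → ℝ | 0 < f p} \ {p | ∑ α, X α * pVec p α = 0}) :=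
        (measure_diff_null (phi_null X hX)).symm
      _ ≤ volume (Function.support g) := measure_mono hsub
  have hPos : ∀ X : Fin 4 → ℝ, X ≠ 0 → 0 < X ⬝ᵥ Tmat f *ᵥ X := fun X hX =>
    (hEq X) ▸ hQpos X hX
  have hIsymm : (Tmat f).IsSymm := by
    rw [Matrix.IsSymm]
    ext α β
    simp only [transpose_apply, Tmat, Matrix.of_apply]
    exact integral_congr_ae (Filter.Eventually.of_forall fun p => by ring)
  refine ⟨hIsymm, Matrix.PosDef.of_dotProduct_mulVec_pos ?_ (fun x hx => ?_), fun X hX => ⟨hEq X, hPos X hX⟩⟩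
  · ext α β
    simp only [conjTranspose_apply, Tmat, Matrix.of_apply, star_trivial]
    exact integral_congr_ae (Filter.Eventually.of_forall fun p => by ring)
  · have : star x = x := funext fun α => star_trivial _
    rw [this]
    exact hPos x hx
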